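/- Let ε > 0. For every M > 0 there exists Ξ > 0 such that for all real ξ > Ξ, there is λ ∈ ℂ with (λ² + ξ²)² = i·ε·ξ³ and Re λ ≥ M. -/

import Mathlib

open Complex

lemma sqrt_im_nonneg (z : ℂ) : ∃ w : ℂ, w ^ 2 = z ∧ 0 ≤ w.im := by
  obtain ⟨w, hw⟩ := IsAlgClosed.exists_pow_nat_eq z (n := 2) (by norm_num)
  rcases le_or_gt 0 w.im with h | h
  · exact ⟨w, hw, h⟩
  · exact ⟨-w, by rw [neg_pow]; simpa using hw, by simp [le_of_lt h]⟩

lemma sqrt_re_formula (z : ℂ) :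
    ∃ l : ℂ, l ^ 2 = z ∧ 0 ≤ l.re ∧ l.re ^ 2 = (‖z‖ + z.re) / 2 := by
  obtain ⟨w, hw⟩ := IsAlgClosed.exists_pow_nat_eq z (n := 2) (by norm_num)
  have h1 : w.re * w.re - w.im * w.im = z.re := by
    have := congrArg Complex.re hw
    simpa [pow_two, Complex.mul_re] using this
  have h2 : ‖z‖ = w.re * w.re + w.im * w.im := by
    rw [← Complex.normSq_apply, ← Complex.sq_norm, ← hw, norm_pow]
  have hform : w.re ^ 2 = (‖z‖ + z.re) / 2 := by
    rw [h2, ← h1]; ring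
  rcases le_or_gt 0 w.re with h | h
  · exact ⟨w, hw, h, hform⟩
  · refine ⟨-w, by rw [neg_pow]; simpa using hw, by simp [le_of_lt h], ?_⟩
    simpa using hform

set_option maxHeartbeats 1000000 in
theorem stmt_14 (ε : ℝ) (hε : 0 < ε) :
    ∀ M : ℝ, 0 < M → ∃ Ξ : ℝ, 0 < Ξ ∧ ∀ ξ : ℝ, Ξ < ξ →
      ∃ lam : ℂ, (lam^2 + (ξ : ℂ)^2)^2 = Complex.I * ε * (ξ : ℂ)^3 ∧ M ≤ lam.re := by
  intro M hM
  refine ⟨8 * M ^ 2 / ε + ε / 2 + 1, by positivity, ?_⟩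
  intro ξ hξ
  have hΞpos : (0:ℝ) < 8 * M ^ 2 / ε + ε / 2 + 1 := by positivity
  have hξ0 : 0 < ξ := lt_trans hΞpos hξ
  obtain ⟨w, hw2, hwim⟩ := sqrt_im_nonneg (Complex.I * (ε : ℂ) * (ξ : ℂ) ^ 3)
  -- real and imaginary parts of w
  have h1 : w.re * w.re - w.im * w.im = 0 := by
    have := congrArg Complex.re hw2
    simpa [pow_two, Complex.mul_re, Complex.mul_im, ← Complex.ofReal_pow] using this
  have h2 : w.re * w.im + w.im * w.re = ε * ξ ^ 3 := by
    have := congrArg Complex.im hw2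
    simpa [pow_two, Complex.mul_re, Complex.mul_im, ← Complex.ofReal_pow] using this
  have hb3 : 0 < ε * ξ ^ 3 := by positivity
  have hbpos : 0 < w.im := by
    rcases eq_or_lt_of_le hwim with h | h
    · exfalso; rw [← h] at h2; nlinarith
    · exact h
  have hrepos : 0 < w.re := by nlinarith
  have hre_eq : w.re = w.im := by nlinarith
  have hbsq : 2 * w.im ^ 2 = ε * ξ ^ 3 := by nlinarith
  -- now take square root of z = -ξ² + w
  obtain ⟨l, hl2, hlre, hlsq⟩ := sqrt_re_formula (-(ξ : ℂ) ^ 2 + w)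
  refine ⟨l, ?_, ?_⟩
  · have : l ^ 2 + (ξ : ℂ) ^ 2 = w := by rw [hl2]; ring
    rw [this, hw2]
  · set b := w.im with hb
    set r := ‖(-(ξ : ℂ) ^ 2 + w)‖ with hr
    have hzre : (-(ξ : ℂ) ^ 2 + w).re = b - ξ ^ 2 := by
      simp only [Complex.add_re, Complex.neg_re, ← Complex.ofReal_pow,
        Complex.ofReal_re, hre_eq]
      ring
    have hzim : (-(ξ : ℂ) ^ 2 + w).im = b := by
      simp only [Complex.add_im, Complex.neg_im, ← Complex.ofReal_pow,
        Complex.ofReal_im]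
      ring
    have hr0 : 0 ≤ r := norm_nonneg _
    rw [hzre] at hlsq
    have hrsq : r ^ 2 = (b - ξ ^ 2) ^ 2 + b ^ 2 := by
      rw [hr, Complex.sq_norm, Complex.normSq_apply, hzre, hzim]; ring
    clear_value b r
    clear hzre hzim hr hb hw2 hl2
    have hεξ : ε / 2 + 1 < ξ := by
      have : 0 ≤ 8 * M ^ 2 / ε := by positivity
      linarith
    -- b < ξ^2
    have hbξ : b < ξ ^ 2 := by
      have hb2 : b ^ 2 < (ξ ^ 2) ^ 2 := by
        nlinarith [mul_lt_mul_of_pos_right (show ε < 2 * ξ by linarith)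
          (pow_pos hξ0 3)]
      exact lt_of_pow_lt_pow_left₀ 2 (sq_nonneg ξ) hb2
    -- r ≤ ξ^2
    have hrle : r ≤ ξ ^ 2 := by
      have hr2 : r ^ 2 ≤ (ξ ^ 2) ^ 2 := by nlinarith
      exact le_of_pow_le_pow_left₀ two_ne_zero (sq_nonneg ξ) hr2
    have hsum0 : 0 ≤ r + (b - ξ ^ 2) := by
      nlinarith [hrsq, hr0, hbpos, sq_nonneg (r + (b - ξ ^ 2))]
    have hprod : (r + (b - ξ ^ 2)) * (r - (b - ξ ^ 2)) = b ^ 2 := by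
      linear_combination hrsq
    have hdiff : r - (b - ξ ^ 2) ≤ 2 * ξ ^ 2 := by linarith
    have h4 : 4 * M ^ 2 * ξ ^ 2 < b ^ 2 := by
      have hbM : 8 * M ^ 2 < ε * ξ := by
        have h8 : 8 * M ^ 2 / ε < ξ := by linarith
        have := (div_lt_iff₀ hε).mp h8
        linarith
      linarith [mul_lt_mul_of_pos_right hbM (mul_pos hξ0 hξ0), hbsq]
    have h5 : b ^ 2 ≤ (r + (b - ξ ^ 2)) * (2 * ξ ^ 2) := by
      calc b ^ 2 = (r + (b - ξ ^ 2)) * (r - (b - ξ ^ 2)) := hprod.symm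
        _ ≤ (r + (b - ξ ^ 2)) * (2 * ξ ^ 2) :=
          mul_le_mul_of_nonneg_left hdiff hsum0
    have h6 : 2 * M ^ 2 * (2 * ξ ^ 2) < (r + (b - ξ ^ 2)) * (2 * ξ ^ 2) := by
      have hq : 2 * M ^ 2 * (2 * ξ ^ 2) = 4 * M ^ 2 * ξ ^ 2 := by ring
      linarith
    have hkey : 2 * M ^ 2 ≤ r + (b - ξ ^ 2) :=
      le_of_lt (lt_of_mul_lt_mul_right h6 (by positivity))
    have hM2 : M ^ 2 ≤ l.re ^ 2 := by
      rw [hlsq]; linarith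
    by_contra hcon
    push_neg at hcon
    have : l.re ^ 2 < M ^ 2 := by nlinarith [hlre, hM, hcon]
    linarith
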